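/- Let k ⊆ k' be an extension of fields of characteristic 0 and f ∈ k[x_1,...,x_n] nonzero. Then the Bernstein–Sato polynomial of f computed over k equals the Bernstein–Sato polynomial of f viewed in k'[x_1,...,x_n]: b_f(s) is unchanged under extension of the base field. -/

import Mathlib

open MvPolynomial

noncomputable section BernsteinSato

namespace BS

variable (k : Type*) [Field k] [CharZero k] (n : ℕ)

/-- The fraction field of the polynomial ring `k[x_1, ..., x_n]`. -/
abbrev K := FractionRing (MvPolynomial (Fin n) k)

/-- The canonical map `k[x_1,...,x_n] → K`. -/
abbrev ι : MvPolynomial (Fin n) k →+* K k n :=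
  algebraMap (MvPolynomial (Fin n) k) (K k n)

/-- The partial derivative `∂/∂x_i` extended to the fraction field `K` by the
quotient rule `d(a/b) = (b·da - a·db)/b²`. -/
def pd (i : Fin n) (x : K k n) : K k n :=
  let s := IsLocalization.sec (nonZeroDivisors (MvPolynomial (Fin n) k)) x
  (ι k n (pderiv i s.1) * ι k n (s.2 : MvPolynomial (Fin n) k)
      - ι k n s.1 * ι k n (pderiv i (s.2 : MvPolynomial (Fin n) k)))
    / (ι k n (s.2 : MvPolynomial (Fin n) k)) ^ 2

/-- The coefficientwise extension of `pd i` to `K[s]`. -/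
def pdS (i : Fin n) (p : Polynomial (K k n)) : Polynomial (K k n) :=
  p.sum fun j c => Polynomial.C (pd k n i c) * Polynomial.X ^ j

/-- The action of `∂_i` on the module `k[x, 1/f, s]·f^s`, where an element
`p ∈ K[s]` represents `p·f^s` :
`∂_i (p f^s) = ((∂p/∂x_i) + s p (∂f/∂x_i)/f) f^s`. -/
def Dop (f : MvPolynomial (Fin n) k) (i : Fin n) (p : Polynomial (K k n)) :
    Polynomial (K k n) :=
  pdS k n i p + Polynomial.X * Polynomial.C (ι k n (pderiv i f) / ι k n f) * p

/-- The predicate `InSub f p` says that `p·f^s` belongs to the `A_n(k)[s]`-submodule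
of `k[x, 1/f, s]·f^s` generated by `f^{s+1} = f·f^s`; that is, `p·f^s = Q·f^{s+1}`
for some operator `Q ∈ A_n(k)[s]`. The submodule is the closure of `{f·f^s}` under
addition, scalar multiplication by `k`, multiplication by the `x_i`, multiplication
by `s`, and the action of the `∂_i`. -/
inductive InSub (f : MvPolynomial (Fin n) k) : Polynomial (K k n) → Prop
  | base : InSub f (Polynomial.C (ι k n f))
  | add {p q} : InSub f p → InSub f q → InSub f (p + q)
  | smul (c : k) {p} : InSub f p →
      InSub f (Polynomial.C (ι k n (MvPolynomial.C c)) * p)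
  | mulX (i : Fin n) {p} : InSub f p →
      InSub f (Polynomial.C (ι k n (MvPolynomial.X i)) * p)
  | mulS {p} : InSub f p → InSub f (Polynomial.X * p)
  | diff (i : Fin n) {p} : InSub f p → InSub f (Dop k n f i p)

/-- `J(f)`: the set of polynomials `b(s) ∈ k[s]` for which there exists
`Q ∈ A_n(k)[s]` with `b(s)·f^s = Q·f^{s+1}`. -/
def bsSet (f : MvPolynomial (Fin n) k) : Set (Polynomial k) :=
  {b | InSub k n f (b.map ((ι k n).comp (MvPolynomial.C)))}

/-- `b` is the Bernstein–Sato polynomial of `f`: the monic generator of the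
ideal `J(f)` of polynomials satisfying the functional equation. -/
def IsBernsteinSato (f : MvPolynomial (Fin n) k) (b : Polynomial k) : Prop :=
  b.Monic ∧ b ∈ bsSet k n f ∧ ∀ c ∈ bsSet k n f, b ∣ c

end BS

end BernsteinSato


noncomputable section Aux

namespace BSAux

open BS Polynomial

set_option linter.unusedSectionVars false
set_option maxHeartbeats 1000000
set_option synthInstance.maxHeartbeats 400000

variable {k : Type*} [Field k] [CharZero k] {n : ℕ}

lemma iota_inj : Function.Injective (ι k n) := IsFractionRing.injective _ _

lemma iota_ne_zero {a : MvPolynomial (Fin n) k} (ha : a ≠ 0) : ι k n a ≠ 0 := by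
  intro h
  exact ha (iota_inj (by simpa using h))

lemma pd_def (i : Fin n) (x : K k n) :
    pd k n i x =
      (ι k n (pderiv i (IsLocalization.sec (nonZeroDivisors (MvPolynomial (Fin n) k)) x).1)
          * ι k n ((IsLocalization.sec (nonZeroDivisors (MvPolynomial (Fin n) k)) x).2 : MvPolynomial (Fin n) k)
        - ι k n (IsLocalization.sec (nonZeroDivisors (MvPolynomial (Fin n) k)) x).1
          * ι k n (pderiv i ((IsLocalization.sec (nonZeroDivisors (MvPolynomial (Fin n) k)) x).2 : MvPolynomial (Fin n) k)))
      / (ι k n ((IsLocalization.sec (nonZeroDivisors (MvPolynomial (Fin n) k)) x).2 : MvPolynomial (Fin n) k)) ^ 2 := rfl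

lemma exists_rep (x : K k n) :
    ∃ a b : MvPolynomial (Fin n) k, b ≠ 0 ∧ x = ι k n a / ι k n b := by
  refine ⟨(IsLocalization.sec (nonZeroDivisors (MvPolynomial (Fin n) k)) x).1,
    (IsLocalization.sec (nonZeroDivisors (MvPolynomial (Fin n) k)) x).2, ?_, ?_⟩
  · exact nonZeroDivisors.ne_zero (IsLocalization.sec (nonZeroDivisors (MvPolynomial (Fin n) k)) x).2.prop
  · rw [eq_div_iff (iota_ne_zero (nonZeroDivisors.ne_zero
      (IsLocalization.sec (nonZeroDivisors (MvPolynomial (Fin n) k)) x).2.prop))]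
    exact IsLocalization.sec_spec _ x

lemma pd_eq (i : Fin n) {a b : MvPolynomial (Fin n) k} (hb : b ≠ 0) :
    pd k n i (ι k n a / ι k n b) =
      (ι k n (pderiv i a) * ι k n b - ι k n a * ι k n (pderiv i b)) / ι k n b ^ 2 := by
  set x : K k n := ι k n a / ι k n b with hx
  set a₀ := (IsLocalization.sec (nonZeroDivisors (MvPolynomial (Fin n) k)) x).1 with ha₀
  set b₀ : MvPolynomial (Fin n) k :=
    ((IsLocalization.sec (nonZeroDivisors (MvPolynomial (Fin n) k)) x).2 : MvPolynomial (Fin n) k) with hb₀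
  have hb₀ne : b₀ ≠ 0 := nonZeroDivisors.ne_zero
    (IsLocalization.sec (nonZeroDivisors (MvPolynomial (Fin n) k)) x).2.prop
  have hιb : ι k n b ≠ 0 := iota_ne_zero hb
  have hιb₀ : ι k n b₀ ≠ 0 := iota_ne_zero hb₀ne
  have hsec : x * ι k n b₀ = ι k n a₀ := IsLocalization.sec_spec _ x
  have ιE1 : ι k n a * ι k n b₀ = ι k n a₀ * ι k n b := by
    rw [hx] at hsec
    field_simp at hsec
    linear_combination hsec
  have E1 : a * b₀ = a₀ * b := by
    apply iota_inj
    rw [map_mul, map_mul]; exact ιE1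
  have E2 : pderiv i a * b₀ + a * pderiv i b₀ = pderiv i a₀ * b + a₀ * pderiv i b := by
    have h := congrArg (pderiv i) E1
    rw [pderiv_mul, pderiv_mul] at h
    linear_combination h
  have ιE2 : ι k n (pderiv i a) * ι k n b₀ + ι k n a * ι k n (pderiv i b₀)
      = ι k n (pderiv i a₀) * ι k n b + ι k n a₀ * ι k n (pderiv i b) := by
    have h := congrArg (ι k n) E2
    rw [RingHom.map_add, RingHom.map_add, RingHom.map_mul, RingHom.map_mul,
      RingHom.map_mul, RingHom.map_mul] at h
    exact h
  rw [pd_def, ← ha₀, ← hb₀]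
  rw [div_eq_div_iff (pow_ne_zero _ hιb₀) (pow_ne_zero _ hιb)]
  linear_combination (ι k n (pderiv i b₀) * ι k n b + ι k n (pderiv i b) * ι k n b₀) * ιE1
    - (ι k n b * ι k n b₀) * ιE2

lemma pd_zero (i : Fin n) : pd k n i (0 : K k n) = 0 := by
  have h0 : (0 : K k n) = ι k n 0 / ι k n 1 := by simp
  rw [h0, pd_eq i (one_ne_zero : (1 : MvPolynomial (Fin n) k) ≠ 0)]
  simp

lemma pd_add (i : Fin n) (x y : K k n) :
    pd k n i (x + y) = pd k n i x + pd k n i y := by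
  obtain ⟨a, b, hb, hx⟩ := exists_rep x
  obtain ⟨c, d, hd, hy⟩ := exists_rep y
  have hbd : b * d ≠ 0 := mul_ne_zero hb hd
  have hxy : x + y = ι k n (a * d + c * b) / ι k n (b * d) := by
    rw [hx, hy, RingHom.map_add, RingHom.map_mul, RingHom.map_mul, RingHom.map_mul]
    rw [div_add_div _ _ (iota_ne_zero hb) (iota_ne_zero hd)]
    ring_nf
  rw [hxy, hx, hy, pd_eq i hbd, pd_eq i hb, pd_eq i hd]
  have e1 : pderiv i (a * d + c * b) = pderiv i a * d + a * pderiv i d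
      + (pderiv i c * b + c * pderiv i b) := by
    rw [map_add, pderiv_mul, pderiv_mul]
  have e2 : pderiv i (b * d) = pderiv i b * d + b * pderiv i d := pderiv_mul
  rw [e1, e2]
  simp only [RingHom.map_add, RingHom.map_mul]
  field_simp [iota_ne_zero hb, iota_ne_zero hd]
  ring

lemma pd_constmul (i : Fin n) (c : k) (x : K k n) :
    pd k n i (ι k n (MvPolynomial.C c) * x) = ι k n (MvPolynomial.C c) * pd k n i x := by
  obtain ⟨a, b, hb, hx⟩ := exists_rep x
  have hcx : ι k n (MvPolynomial.C c) * x = ι k n (MvPolynomial.C c * a) / ι k n b := by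
    rw [hx, RingHom.map_mul, mul_div_assoc]
  rw [hcx, hx, pd_eq i hb, pd_eq i hb, MvPolynomial.pderiv_C_mul, RingHom.map_mul,
    RingHom.map_mul]
  field_simp [iota_ne_zero hb]

lemma pdS_coeff (i : Fin n) (p : Polynomial (K k n)) (j : ℕ) :
    (pdS k n i p).coeff j = pd k n i (p.coeff j) := by
  rw [pdS, Polynomial.sum_def, Polynomial.finset_sum_coeff]
  simp only [Polynomial.coeff_C_mul, Polynomial.coeff_X_pow, mul_ite, mul_one, mul_zero]
  rw [Finset.sum_ite_eq p.support j (fun a => pd k n i (p.coeff a))]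
  by_cases h : j ∈ p.support
  · simp [h]
  · simp only [h, if_false]
    rw [Polynomial.notMem_support_iff.mp h, pd_zero]

lemma pdS_add (i : Fin n) (p q : Polynomial (K k n)) :
    pdS k n i (p + q) = pdS k n i p + pdS k n i q := by
  ext j; simp [pdS_coeff, pd_add]

lemma pdS_constmul (i : Fin n) (c : k) (p : Polynomial (K k n)) :
    pdS k n i (Polynomial.C (ι k n (MvPolynomial.C c)) * p)
      = Polynomial.C (ι k n (MvPolynomial.C c)) * pdS k n i p := by
  ext j; simp [pdS_coeff, pd_constmul]

lemma Dop_add (f : MvPolynomial (Fin n) k) (i : Fin n) (p q : Polynomial (K k n)) :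
    Dop k n f i (p + q) = Dop k n f i p + Dop k n f i q := by
  simp only [Dop, pdS_add]; ring

lemma Dop_constmul (f : MvPolynomial (Fin n) k) (i : Fin n) (c : k) (p : Polynomial (K k n)) :
    Dop k n f i (Polynomial.C (ι k n (MvPolynomial.C c)) * p)
      = Polynomial.C (ι k n (MvPolynomial.C c)) * Dop k n f i p := by
  simp only [Dop, pdS_constmul]; ring

section Ext

variable {k' : Type*} [Field k'] [CharZero k'] [Algebra k k']

lemma phi_inj : Function.Injective (algebraMap k k') := (algebraMap k k').injective

lemma map_phi_inj :
    Function.Injective (MvPolynomial.map (σ := Fin n) (algebraMap k k')) :=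
  MvPolynomial.map_injective _ (phi_inj (k := k) (k' := k'))

/-- The induced map on fraction fields. -/
def psiK : K k n →+* K k' n :=
  IsFractionRing.lift (g := (ι k' n).comp (MvPolynomial.map (algebraMap k k')))
    (fun _ _ h => map_phi_inj (iota_inj h))

lemma psiK_iota (a : MvPolynomial (Fin n) k) :
    psiK (k := k) (k' := k') (n := n) (ι k n a) = ι k' n (MvPolynomial.map (algebraMap k k') a) :=
  IsFractionRing.lift_algebraMap _ _

lemma psiK_pd (i : Fin n) (x : K k n) :
    psiK (k' := k') (pd k n i x) = pd k' n i (psiK (k' := k') x) := by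
  obtain ⟨a, b, hb, hx⟩ := exists_rep x
  have hmb : MvPolynomial.map (algebraMap k k') b ≠ 0 := by
    intro h0
    exact hb (map_phi_inj (by simpa using h0))
  rw [hx, pd_eq i hb, map_div₀, RingHom.map_sub, RingHom.map_mul, RingHom.map_mul,
    RingHom.map_pow, psiK_iota, psiK_iota, psiK_iota, psiK_iota, map_div₀, psiK_iota,
    psiK_iota, pd_eq i hmb, MvPolynomial.pderiv_map, MvPolynomial.pderiv_map]

lemma pdS_map (i : Fin n) (p : Polynomial (K k n)) :
    (pdS k n i p).map (psiK (k' := k')) = pdS k' n i (p.map (psiK (k' := k'))) := by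
  ext j; simp [Polynomial.coeff_map, pdS_coeff, psiK_pd]

lemma Dop_map (f : MvPolynomial (Fin n) k) (i : Fin n) (p : Polynomial (K k n)) :
    (Dop k n f i p).map (psiK (k' := k'))
      = Dop k' n (MvPolynomial.map (algebraMap k k') f) i (p.map (psiK (k' := k'))) := by
  have hpd : psiK (k' := k') (ι k n (pderiv i f) / ι k n f)
      = ι k' n (pderiv i (MvPolynomial.map (algebraMap k k') f))
        / ι k' n (MvPolynomial.map (algebraMap k k') f) := by
    rw [map_div₀, psiK_iota, psiK_iota, MvPolynomial.pderiv_map]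
  simp only [Dop, Polynomial.map_add, Polynomial.map_mul, Polynomial.map_C, Polynomial.map_X,
    pdS_map, hpd]

lemma insub_map {f : MvPolynomial (Fin n) k} {p : Polynomial (K k n)}
    (h : InSub k n f p) :
    InSub k' n (MvPolynomial.map (algebraMap k k') f) (p.map (psiK (k' := k'))) := by
  induction h with
  | base => rw [Polynomial.map_C, psiK_iota]; exact InSub.base
  | add _ _ h1 h2 => rw [Polynomial.map_add]; exact InSub.add h1 h2
  | smul c _ h1 =>
      rw [Polynomial.map_mul, Polynomial.map_C, psiK_iota, MvPolynomial.map_C]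
      exact InSub.smul _ h1
  | mulX i _ h1 =>
      rw [Polynomial.map_mul, Polynomial.map_C, psiK_iota, MvPolynomial.map_X]
      exact InSub.mulX i h1
  | mulS _ h1 => rw [Polynomial.map_mul, Polynomial.map_X]; exact InSub.mulS h1
  | diff i _ h1 => rw [Dop_map]; exact InSub.diff i h1

lemma insub_decomp {f : MvPolynomial (Fin n) k} {p : Polynomial (K k' n)}
    (h : InSub k' n (MvPolynomial.map (algebraMap k k') f) p) :
    ∃ (m : ℕ) (c : Fin m → k') (q : Fin m → Polynomial (K k n)),
      (∀ i, InSub k n f (q i)) ∧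
      p = ∑ i, Polynomial.C (ι k' n (MvPolynomial.C (c i))) * (q i).map (psiK (k' := k')) := by
  induction h with
  | base =>
      refine ⟨1, fun _ => 1, fun _ => Polynomial.C (ι k n f), fun _ => InSub.base, ?_⟩
      simp [Polynomial.map_C, psiK_iota]
  | add _ _ ih1 ih2 =>
      obtain ⟨m1, c1, q1, hq1, rfl⟩ := ih1
      obtain ⟨m2, c2, q2, hq2, rfl⟩ := ih2
      refine ⟨m1 + m2, Fin.addCases c1 c2, Fin.addCases q1 q2, ?_, ?_⟩
      · intro i
        refine Fin.addCases (fun i => by simpa using hq1 i) (fun i => by simpa using hq2 i) i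
      · rw [Fin.sum_univ_add]; simp
  | smul c _ ih =>
      obtain ⟨m, cs, q, hq, rfl⟩ := ih
      refine ⟨m, fun i => c * cs i, q, hq, ?_⟩
      rw [Finset.mul_sum]
      refine Finset.sum_congr rfl fun i _ => ?_
      rw [MvPolynomial.C_mul, RingHom.map_mul, Polynomial.C_mul]
      ring
  | mulX i0 _ ih =>
      obtain ⟨m, cs, q, hq, rfl⟩ := ih
      refine ⟨m, cs, fun i => Polynomial.C (ι k n (MvPolynomial.X i0)) * q i,
        fun i => InSub.mulX i0 (hq i), ?_⟩
      rw [Finset.mul_sum]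
      refine Finset.sum_congr rfl fun i _ => ?_
      rw [Polynomial.map_mul, Polynomial.map_C, psiK_iota, MvPolynomial.map_X]
      ring
  | mulS _ ih =>
      obtain ⟨m, cs, q, hq, rfl⟩ := ih
      refine ⟨m, cs, fun i => Polynomial.X * q i, fun i => InSub.mulS (hq i), ?_⟩
      rw [Finset.mul_sum]
      refine Finset.sum_congr rfl fun i _ => ?_
      rw [Polynomial.map_mul, Polynomial.map_X]
      ring
  | diff i0 _ ih =>
      obtain ⟨m, cs, q, hq, rfl⟩ := ih
      refine ⟨m, cs, fun i => Dop k n f i0 (q i), fun i => InSub.diff i0 (hq i), ?_⟩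
      have hsum : Dop k' n (MvPolynomial.map (algebraMap k k') f) i0
            (∑ i, Polynomial.C (ι k' n (MvPolynomial.C (cs i))) * (q i).map (psiK (k' := k')))
          = ∑ i, Dop k' n (MvPolynomial.map (algebraMap k k') f) i0
            (Polynomial.C (ι k' n (MvPolynomial.C (cs i))) * (q i).map (psiK (k' := k'))) :=
        map_sum (AddMonoidHom.mk' (Dop k' n (MvPolynomial.map (algebraMap k k') f) i0)
          (Dop_add _ i0)) _ _
      rw [hsum]
      refine Finset.sum_congr rfl fun i _ => ?_
      rw [Dop_constmul, Dop_map]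

/-- Coefficientwise application of a `k`-linear functional on `k'`. -/
def applyDual (π : k' →ₗ[k] k) (p : Polynomial k') : Polynomial k :=
  ⟨⟨Finsupp.mapRange π π.map_zero p.toFinsupp.coeff⟩⟩

lemma applyDual_coeff (π : k' →ₗ[k] k) (p : Polynomial k') (j : ℕ) :
    (applyDual π p).coeff j = π (p.coeff j) := by
  simp [applyDual, Polynomial.coeff_ofFinsupp, Finsupp.mapRange_apply, Polynomial.coeff]

lemma applyDual_mul_map (π : k' →ₗ[k] k) (u : Polynomial k) (Q : Polynomial k') :
    applyDual π (u.map (algebraMap k k') * Q) = u * applyDual π Q := by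
  apply Polynomial.ext; intro m0
  rw [applyDual_coeff, Polynomial.coeff_mul, Polynomial.coeff_mul, map_sum π]
  refine Finset.sum_congr rfl fun x _ => ?_
  rw [Polynomial.coeff_map, applyDual_coeff, ← Algebra.smul_def, map_smul, smul_eq_mul]

lemma applyDual_degree (π : k' →ₗ[k] k) (p : Polynomial k') :
    (applyDual π p).degree ≤ p.degree := by
  rw [Polynomial.degree_le_iff_coeff_zero]
  intro m hm
  rw [applyDual_coeff, Polynomial.coeff_eq_zero_of_degree_lt hm, map_zero]

lemma pi_mul_alg (π : k' →ₗ[k] k) (x : k') (r : k) :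
    π (x * algebraMap k k' r) = π x * r := by
  rw [mul_comm, ← Algebra.smul_def, map_smul, smul_eq_mul, mul_comm]

/-- Transfer of a scalar linear relation along a dual functional. -/
lemma dual_transfer (π : k' →ₗ[k] k) {m : ℕ} (c : Fin m → k') (g : Fin m → K k n) (e : k')
    (h : ι k' n (MvPolynomial.C e)
      = ∑ i, ι k' n (MvPolynomial.C (c i)) * psiK (k' := k') (g i)) :
    ι k n (MvPolynomial.C (π e)) = ∑ i, ι k n (MvPolynomial.C (π (c i))) * g i := by
  obtain ⟨d, hd⟩ := IsLocalization.exist_integer_multiples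
    (nonZeroDivisors (MvPolynomial (Fin n) k)) Finset.univ g
  have hdne : (d : MvPolynomial (Fin n) k) ≠ 0 := nonZeroDivisors.ne_zero d.prop
  choose a ha using fun i => RingHom.mem_range.mp (hd i (Finset.mem_univ i))
  -- `ha i : ι k n (a i) = (d : _) • g i`
  have hgi : ∀ i, g i = ι k n (a i) / ι k n (d : MvPolynomial (Fin n) k) := by
    intro i
    rw [eq_div_iff (iota_ne_zero hdne), mul_comm, ← Algebra.smul_def]
    exact (ha i).symm
  have hmd : MvPolynomial.map (algebraMap k k') (d : MvPolynomial (Fin n) k) ≠ 0 := by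
    intro h0
    exact hdne (map_phi_inj (by simpa using h0))
  have key : MvPolynomial.C e * MvPolynomial.map (algebraMap k k') (d : MvPolynomial (Fin n) k)
      = ∑ i, MvPolynomial.C (c i) * MvPolynomial.map (algebraMap k k') (a i) := by
    apply iota_inj (k := k')
    rw [RingHom.map_mul, map_sum (ι k' n), h, Finset.sum_mul]
    refine Finset.sum_congr rfl fun i _ => ?_
    rw [RingHom.map_mul, mul_assoc]
    congr 1
    rw [← psiK_iota (k' := k') ((d : MvPolynomial (Fin n) k)), ← RingHom.map_mul,
      ← psiK_iota (k' := k') (a i)]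
    congr 1
    rw [mul_comm, ← Algebra.smul_def]
    exact (ha i).symm
  have keyk : MvPolynomial.C (π e) * (d : MvPolynomial (Fin n) k)
      = ∑ i, MvPolynomial.C (π (c i)) * a i := by
    apply MvPolynomial.ext; intro mo
    rw [MvPolynomial.coeff_C_mul, MvPolynomial.coeff_sum]
    simp only [MvPolynomial.coeff_C_mul]
    have hco := congrArg (MvPolynomial.coeff mo) key
    rw [MvPolynomial.coeff_sum] at hco
    simp only [MvPolynomial.coeff_C_mul, MvPolynomial.coeff_map] at hco
    have hπ := congrArg π hco
    rw [map_sum π] at hπ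
    simp only [pi_mul_alg] at hπ
    exact hπ
  have keyK := congrArg (ι k n) keyk
  rw [RingHom.map_mul, map_sum (ι k n)] at keyK
  have hrhs : ∑ i, ι k n (MvPolynomial.C (π (c i))) * g i
      = (∑ i, ι k n (MvPolynomial.C (π (c i)) * a i)) / ι k n (d : MvPolynomial (Fin n) k) := by
    rw [Finset.sum_div]
    refine Finset.sum_congr rfl fun i _ => ?_
    rw [hgi i, RingHom.map_mul, mul_div_assoc]
  rw [hrhs, ← keyK, mul_div_assoc, div_self (iota_ne_zero hdne), mul_one]

end Ext

end BSAux

end Aux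

theorem bernsteinSato_base_change
    (k : Type*) [Field k] [CharZero k]
    (k' : Type*) [Field k'] [CharZero k'] [Algebra k k'] (n : ℕ)
    (f : MvPolynomial (Fin n) k) (hf : f ≠ 0)
    (b : Polynomial k)
    (b'' : Polynomial k')
    (hb : BS.IsBernsteinSato k n f b)
    (hb'' : BS.IsBernsteinSato k' n (MvPolynomial.map (algebraMap k k') f) b'') :
    b'' = b.map (algebraMap k k') := by
  classical
  open BSAux in
  -- Direction 1 : `b'' ∣ map (algebraMap k k') b`
  have hmem1 : b.map (algebraMap k k') ∈ BS.bsSet k' n (MvPolynomial.map (algebraMap k k') f) := by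
    show BS.InSub k' n (MvPolynomial.map (algebraMap k k') f)
      ((b.map (algebraMap k k')).map ((BS.ι k' n).comp MvPolynomial.C))
    have heq : (b.map (algebraMap k k')).map ((BS.ι k' n).comp MvPolynomial.C)
        = (b.map ((BS.ι k n).comp MvPolynomial.C)).map (psiK (k' := k')) := by
      rw [Polynomial.map_map, Polynomial.map_map]
      congr 1
      apply RingHom.ext; intro c
      simp only [RingHom.comp_apply]
      rw [psiK_iota, MvPolynomial.map_C]
    rw [heq]
    exact insub_map hb.2.1
  have hdvd1 : b'' ∣ b.map (algebraMap k k') := hb''.2.2 _ hmem1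
  -- Direction 2 : `map (algebraMap k k') b ∣ b''`
  obtain ⟨m, cs, q, hq, hrep⟩ := insub_decomp (f := f) hb''.2.1
  have hkey : ∀ π : k' →ₗ[k] k, b ∣ applyDual π b'' := by
    intro π
    apply hb.2.2
    show BS.InSub k n f ((applyDual π b'').map ((BS.ι k n).comp MvPolynomial.C))
    have hrepπ : (applyDual π b'').map ((BS.ι k n).comp MvPolynomial.C)
        = ∑ i, Polynomial.C (BS.ι k n (MvPolynomial.C (π (cs i)))) * q i := by
      apply Polynomial.ext; intro j
      rw [Polynomial.coeff_map, Polynomial.finset_sum_coeff]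
      simp only [Polynomial.coeff_C_mul]
      rw [applyDual_coeff]
      simp only [RingHom.comp_apply]
      apply dual_transfer π cs (fun i => (q i).coeff j)
      have hco := congrArg (fun P : Polynomial (BS.K k' n) => P.coeff j) hrep
      simpa [Polynomial.coeff_map, Polynomial.finset_sum_coeff, Polynomial.coeff_C_mul]
        using hco
    rw [hrepπ]
    have h0 : BS.InSub k n f 0 := by
      simpa using BS.InSub.smul (0 : k) (BS.InSub.base (f := f))
    exact Finset.sum_induction _ _ (fun _ _ => BS.InSub.add) h0
      (fun i _ => BS.InSub.smul _ (hq i))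
  have hmo' : (b.map (algebraMap k k')).Monic := hb.1.map _
  have hmod : b'' = b.map (algebraMap k k') * (b'' /ₘ (b.map (algebraMap k k'))) + b'' %ₘ (b.map (algebraMap k k')) := by
    have h := Polynomial.modByMonic_add_div b'' (b.map (algebraMap k k'))
    linear_combination -h
  have hRzero : b'' %ₘ (b.map (algebraMap k k')) = 0 := by
    by_contra hR0
    obtain ⟨j, hj⟩ : ∃ j, (b'' %ₘ (b.map (algebraMap k k'))).coeff j ≠ 0 := by
      by_contra hall
      push_neg at hall
      exact hR0 (Polynomial.ext hall)
    obtain ⟨π, hπ⟩ : ∃ π : k' →ₗ[k] k, π ((b'' %ₘ (b.map (algebraMap k k'))).coeff j) ≠ 0 := by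
      by_contra hall
      push_neg at hall
      exact hj ((Module.forall_dual_apply_eq_zero_iff k ((b'' %ₘ (b.map (algebraMap k k'))).coeff j)).mp hall)
    have h1 : applyDual π b''
        = b * applyDual π (b'' /ₘ (b.map (algebraMap k k'))) + applyDual π (b'' %ₘ (b.map (algebraMap k k'))) := by
      conv_lhs => rw [hmod]
      have hadd : applyDual π (b.map (algebraMap k k') * (b'' /ₘ (b.map (algebraMap k k')))
            + b'' %ₘ (b.map (algebraMap k k')))
          = applyDual π (b.map (algebraMap k k') * (b'' /ₘ (b.map (algebraMap k k'))))
            + applyDual π (b'' %ₘ (b.map (algebraMap k k'))) := by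
        apply Polynomial.ext; intro m0
        simp [applyDual_coeff, Polynomial.coeff_add]
      rw [hadd, applyDual_mul_map]
    have hdvdR : b ∣ applyDual π (b'' %ₘ (b.map (algebraMap k k'))) := by
      have h2 := hkey π
      rw [h1] at h2
      exact (dvd_add_right (Dvd.intro _ rfl)).mp h2
    have hRdeg : (b'' %ₘ (b.map (algebraMap k k'))).degree < (b.map (algebraMap k k')).degree :=
      Polynomial.degree_modByMonic_lt _ hmo'
    have hlt : (applyDual π (b'' %ₘ (b.map (algebraMap k k')))).degree < b.degree := by
      refine lt_of_le_of_lt (applyDual_degree π _) ?_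
      rwa [Polynomial.degree_map_eq_of_injective (phi_inj (k := k) (k' := k'))] at hRdeg
    have hz := Polynomial.eq_zero_of_dvd_of_degree_lt hdvdR hlt
    apply hπ
    rw [← applyDual_coeff, hz, Polynomial.coeff_zero]
  have hdvd2 : b.map (algebraMap k k') ∣ b'' := by
    rw [hmod, hRzero, add_zero]
    exact Dvd.intro _ rfl
  exact Polynomial.eq_of_monic_of_associated hb''.1 hmo' (associated_of_dvd_dvd hdvd1 hdvd2)
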